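/- For a weight-0 balanced semimagic square M = X_{2n} diag(Y,Z) X_{2n} of size 2n, the trace of M equals tr Y + tr Z, and the trace of J_{2n}M (the antidiagonal sum of M) equals tr Y - tr Z. Consequently, M is a magic square (both diagonal sums vanish) if and only if tr Y = 0 and tr Z = 0. -/

import Mathlib

open Matrix BigOperators

def Jmat (n : ℕ) : Matrix (Fin n) (Fin n) ℝ :=
  Matrix.of fun i j => if j = i.rev then 1 else 0

def J2mat (n : ℕ) : Matrix (Fin n ⊕ Fin n) (Fin n ⊕ Fin n) ℝ :=
  Matrix.fromBlocks 0 (Jmat n) (Jmat n) 0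

noncomputable def Xmat (n : ℕ) : Matrix (Fin n ⊕ Fin n) (Fin n ⊕ Fin n) ℝ :=
  (Real.sqrt 2)⁻¹ • Matrix.fromBlocks 1 (Jmat n) (Jmat n) (-1)

def IsSemimagic0 {m : Type*} [Fintype m] (M : Matrix m m ℝ) : Prop :=
  (∀ i, ∑ j, M i j = 0) ∧ (∀ j, ∑ i, M i j = 0)

lemma Jmat_mul_Jmat (n : ℕ) : Jmat n * Jmat n = 1 := by
  ext i j
  simp only [Jmat, Matrix.mul_apply, Matrix.of_apply, Matrix.one_apply]
  rw [Finset.sum_eq_single i.rev]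
  · simp [eq_comm, Fin.rev_eq_iff]
  · intro b _ hb; simp [hb]
  · simp

lemma traceJXJ (n : ℕ) (A : Matrix (Fin n) (Fin n) ℝ) :
    (Jmat n * A * Jmat n).trace = A.trace := by
  rw [Matrix.trace_mul_comm, ← Matrix.mul_assoc, Jmat_mul_Jmat, Matrix.one_mul]

lemma trace_fromBlocks' {n : ℕ} (A B C D : Matrix (Fin n) (Fin n) ℝ) :
    (Matrix.fromBlocks A B C D).trace = A.trace + D.trace := by
  simp [Matrix.trace, Matrix.diag, Fintype.sum_sum_type, Matrix.fromBlocks]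

theorem balanced_magic_iff_traces_vanish (n : ℕ) (Y Z : Matrix (Fin n) (Fin n) ℝ)
    (hY : IsSemimagic0 Y)
    (M : Matrix (Fin n ⊕ Fin n) (Fin n ⊕ Fin n) ℝ)
    (hM : M = Xmat n * Matrix.fromBlocks Y 0 0 Z * Xmat n) :
    M.trace = Y.trace + Z.trace ∧
    (J2mat n * M).trace = Y.trace - Z.trace ∧
    ((M.trace = 0 ∧ (J2mat n * M).trace = 0) ↔ (Y.trace = 0 ∧ Z.trace = 0)) := by
  have hc : (Real.sqrt 2)⁻¹ * (Real.sqrt 2)⁻¹ = 2⁻¹ := by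
    rw [← mul_inv, Real.mul_self_sqrt (by norm_num)]
  have hM' : M = (2⁻¹ : ℝ) • Matrix.fromBlocks
      (Y + Jmat n * Z * Jmat n) (Y * Jmat n - Jmat n * Z)
      (Jmat n * Y - Z * Jmat n) (Jmat n * Y * Jmat n + Z) := by
    rw [hM, Xmat]
    rw [Matrix.smul_mul, Matrix.smul_mul, Matrix.mul_smul, smul_smul, hc]
    congr 1
    rw [Matrix.fromBlocks_multiply, Matrix.fromBlocks_multiply]
    congr 1 <;> simp [Matrix.mul_assoc] <;> ring_nf (config := { ifUnchanged := .silent }) <;>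
      simp [Matrix.mul_assoc, sub_eq_add_neg]
  have h1 : M.trace = Y.trace + Z.trace := by
    rw [hM', Matrix.trace_smul, trace_fromBlocks', Matrix.trace_add,
      Matrix.trace_add, traceJXJ, traceJXJ, smul_eq_mul]
    ring
  have h2 : (J2mat n * M).trace = Y.trace - Z.trace := by
    rw [hM', J2mat, Matrix.mul_smul, Matrix.trace_smul, Matrix.fromBlocks_multiply,
      trace_fromBlocks']
    simp only [Matrix.zero_mul, zero_add, add_zero, Matrix.mul_add, Matrix.mul_sub,
      ← Matrix.mul_assoc, Jmat_mul_Jmat, Matrix.one_mul, Matrix.trace_sub, traceJXJ,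
      smul_eq_mul]
    ring
  refine ⟨h1, h2, ?_⟩
  rw [h1, h2]
  constructor
  · rintro ⟨a, b⟩; constructor <;> linarith
  · rintro ⟨a, b⟩; constructor <;> linarith
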